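/- Let S ⊆ ℝ be measurable, let x, x', w, w' ∈ ℝ^k, and assume all survival probabilities appearing below are strictly positive. Then log(1/α(w,x;S)) ≤ 2·log(1/α(w',x;S)) + |⟨w − w', x⟩|² + 2, and also log(1/α(w,x;S)) ≤ 2·log(1/α(w,x';S)) + |⟨w, x − x'⟩|² + 2. -/

import Mathlib

open MeasureTheory ProbabilityTheory Real
open scoped RealInnerProductSpace ENNReal

/-- The survival probability `α(μ; S) = N(μ,1)(S)`. -/
noncomputable def survival (μ : ℝ) (S : Set ℝ) : ℝ :=
  (gaussianReal μ 1 S).toReal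

/-- The truncated Gaussian `N(μ,1,S)`, i.e. `N(μ,1)` conditioned on `S`. -/
noncomputable def truncGaussian (μ : ℝ) (S : Set ℝ) : Measure ℝ :=
  (gaussianReal μ 1)[|S]

lemma pdf_shift_real (μ μ' t : ℝ) :
    rexp ((μ - μ') * (t - μ') - (μ - μ') ^ 2 / 2) * gaussianPDFReal μ' 1 t
      = gaussianPDFReal μ 1 t := by
  simp only [gaussianPDFReal]
  rw [mul_left_comm, ← Real.exp_add]
  congr 1
  rw [Real.exp_eq_exp]
  push_cast
  ring

lemma pdf_shift (μ μ' t : ℝ) :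
    ENNReal.ofReal (rexp ((μ - μ') * (t - μ') - (μ - μ') ^ 2 / 2)) * gaussianPDF μ' 1 t
      = gaussianPDF μ 1 t := by
  rw [gaussianPDF, gaussianPDF, ← ENNReal.ofReal_mul (Real.exp_nonneg _), pdf_shift_real]

lemma pdf_shift_real' (μ μ' t : ℝ) :
    rexp (-((μ - μ') * (t - μ') - (μ - μ') ^ 2 / 2)) * gaussianPDFReal μ' 1 t
      = rexp ((μ - μ') ^ 2) * gaussianPDFReal (2 * μ' - μ) 1 t := by
  simp only [gaussianPDFReal]
  rw [mul_left_comm, ← Real.exp_add, mul_left_comm, ← Real.exp_add]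
  congr 1
  rw [Real.exp_eq_exp]
  push_cast
  ring

lemma pdf_shift' (μ μ' t : ℝ) :
    ENNReal.ofReal (rexp (-((μ - μ') * (t - μ') - (μ - μ') ^ 2 / 2))) * gaussianPDF μ' 1 t
      = ENNReal.ofReal (rexp ((μ - μ') ^ 2)) * gaussianPDF (2 * μ' - μ) 1 t := by
  rw [gaussianPDF, gaussianPDF, ← ENNReal.ofReal_mul (Real.exp_nonneg _),
    ← ENNReal.ofReal_mul (Real.exp_nonneg _), pdf_shift_real']

lemma sq_measure_le (μ μ' : ℝ) (S : Set ℝ) (hS : MeasurableSet S) :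
    (gaussianReal μ' 1 S) ^ 2 ≤ gaussianReal μ 1 S * ENNReal.ofReal (rexp ((μ - μ') ^ 2)) := by
  set δ := μ - μ' with hδ
  set ν := (gaussianReal μ' 1).restrict S with hν
  set f : ℝ → ℝ≥0∞ := fun t => ENNReal.ofReal (rexp (δ * (t - μ') / 2 - δ ^ 2 / 4)) with hf
  set g : ℝ → ℝ≥0∞ := fun t => ENNReal.ofReal (rexp (-(δ * (t - μ') / 2 - δ ^ 2 / 4))) with hg
  have hfm : AEMeasurable f ν := by fun_prop
  have hgm : AEMeasurable g ν := by fun_prop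
  have hCS := ENNReal.lintegral_mul_le_Lp_mul_Lq ν
    (Real.holderConjugate_iff.mpr ⟨one_lt_two, by norm_num⟩ : Real.HolderConjugate 2 2) hfm hgm
  have hfg : ∀ t, (f * g) t = 1 := by
    intro t
    simp only [Pi.mul_apply, hf, hg, ← ENNReal.ofReal_mul (Real.exp_nonneg _), ← Real.exp_add]
    norm_num
  have hsq : ∀ a : ℝ, (ENNReal.ofReal (rexp a)) ^ (2 : ℝ) = ENNReal.ofReal (rexp (2 * a)) := by
    intro a
    rw [ENNReal.ofReal_rpow_of_pos (Real.exp_pos a), Real.rpow_def_of_pos (Real.exp_pos a),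
      Real.log_exp, mul_comm]
  have hlhs : ∫⁻ t, (f * g) t ∂ν = gaussianReal μ' 1 S := by
    simp only [hfg]
    simp [hν]
  have hF : ∫⁻ t, f t ^ (2 : ℝ) ∂ν = gaussianReal μ 1 S := by
    have heq : ∀ t, f t ^ (2 : ℝ) = ENNReal.ofReal (rexp (δ * (t - μ') - δ ^ 2 / 2)) := by
      intro t
      rw [hf, hsq]
      ring_nf
    simp only [heq, hν]
    rw [gaussianReal_of_var_ne_zero _ one_ne_zero, restrict_withDensity hS,
      lintegral_withDensity_eq_lintegral_mul _ (measurable_gaussianPDF _ _) (by fun_prop)]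
    rw [gaussianReal_apply _ one_ne_zero]
    refine lintegral_congr fun t => ?_
    rw [Pi.mul_apply, mul_comm, hδ, pdf_shift μ μ' t]
  have hG : ∫⁻ t, g t ^ (2 : ℝ) ∂ν ≤ ENNReal.ofReal (rexp (δ ^ 2)) := by
    have heq : ∀ t, g t ^ (2 : ℝ) = ENNReal.ofReal (rexp (-(δ * (t - μ') - δ ^ 2 / 2))) := by
      intro t
      rw [hg, hsq]
      ring_nf
    simp only [heq, hν]
    calc ∫⁻ t in S, ENNReal.ofReal (rexp (-(δ * (t - μ') - δ ^ 2 / 2))) ∂(gaussianReal μ' 1)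
        ≤ ∫⁻ t, ENNReal.ofReal (rexp (-(δ * (t - μ') - δ ^ 2 / 2))) ∂(gaussianReal μ' 1) :=
          lintegral_mono' Measure.restrict_le_self le_rfl
      _ = ENNReal.ofReal (rexp (δ ^ 2)) := by
          rw [gaussianReal_of_var_ne_zero _ one_ne_zero,
            lintegral_withDensity_eq_lintegral_mul _ (measurable_gaussianPDF _ _) (by fun_prop)]
          have heq2 : ∀ t, (gaussianPDF μ' 1 *
              fun t => ENNReal.ofReal (rexp (-(δ * (t - μ') - δ ^ 2 / 2)))) t
              = ENNReal.ofReal (rexp (δ ^ 2)) * gaussianPDF (2 * μ' - μ) 1 t := by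
            intro t
            rw [Pi.mul_apply, mul_comm, hδ, pdf_shift' μ μ' t]
          simp only [heq2]
          rw [lintegral_const_mul _ (measurable_gaussianPDF _ _),
            lintegral_gaussianPDF_eq_one _ one_ne_zero, mul_one]
  have key : gaussianReal μ' 1 S ≤
      (gaussianReal μ 1 S) ^ (1 / 2 : ℝ) * (ENNReal.ofReal (rexp (δ ^ 2))) ^ (1 / 2 : ℝ) := by
    calc gaussianReal μ' 1 S = ∫⁻ t, (f * g) t ∂ν := hlhs.symm
      _ ≤ (∫⁻ t, f t ^ (2:ℝ) ∂ν) ^ (1/2 : ℝ) * (∫⁻ t, g t ^ (2:ℝ) ∂ν) ^ (1/2 : ℝ) := hCS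
      _ ≤ _ := by
          rw [hF]
          exact mul_le_mul_right (ENNReal.rpow_le_rpow hG (by norm_num)) _
  have hfin := ENNReal.rpow_le_rpow key (by norm_num : (0:ℝ) ≤ 2)
  rw [ENNReal.mul_rpow_of_nonneg _ _ (by norm_num : (0:ℝ) ≤ 2), ← ENNReal.rpow_mul,
    ← ENNReal.rpow_mul, show (1/2 : ℝ) * 2 = 1 by norm_num, ENNReal.rpow_one,
    ENNReal.rpow_one] at hfin
  rw [← ENNReal.rpow_natCast (gaussianReal μ' 1 S) 2]
  exact_mod_cast hfin

lemma key_lemma (μ μ' : ℝ) (S : Set ℝ) (hS : MeasurableSet S)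
    (h1 : 0 < survival μ S) (h2 : 0 < survival μ' S) :
    Real.log (1 / survival μ S) ≤ 2 * Real.log (1 / survival μ' S) + (μ - μ') ^ 2 + 2 := by
  have hmain := sq_measure_le μ μ' S hS
  have hreal : survival μ' S ^ 2 ≤ survival μ S * rexp ((μ - μ') ^ 2) := by
    have := ENNReal.toReal_mono (by finiteness) hmain
    rwa [ENNReal.toReal_pow, ENNReal.toReal_mul, ENNReal.toReal_ofReal (Real.exp_nonneg _)]
      at this
  have hlog := Real.log_le_log (pow_pos h2 2) hreal
  rw [Real.log_pow, Real.log_mul h1.ne' (Real.exp_ne_zero _), Real.log_exp] at hlog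
  rw [one_div, one_div, Real.log_inv, Real.log_inv]
  push_cast at hlog
  linarith

theorem stmt0 {k : ℕ} (S : Set ℝ) (hS : MeasurableSet S)
    (x x' w w' : EuclideanSpace ℝ (Fin k))
    (h1 : 0 < survival ⟪w, x⟫ S)
    (h2 : 0 < survival ⟪w', x⟫ S)
    (h3 : 0 < survival ⟪w, x'⟫ S) :
    Real.log (1 / survival ⟪w, x⟫ S) ≤
        2 * Real.log (1 / survival ⟪w', x⟫ S) + |⟪w - w', x⟫| ^ 2 + 2 ∧
    Real.log (1 / survival ⟪w, x⟫ S) ≤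
        2 * Real.log (1 / survival ⟪w, x'⟫ S) + |⟪w, x - x'⟫| ^ 2 + 2 := by
  constructor
  · have := key_lemma ⟪w, x⟫ ⟪w', x⟫ S hS h1 h2
    rwa [← inner_sub_left, ← sq_abs] at this
  · have := key_lemma ⟪w, x⟫ ⟪w, x'⟫ S hS h1 h3
    rwa [← inner_sub_right, ← sq_abs] at this
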